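/- Let ν > 0 and 0 ≤ b < a. Then lim_{t→∞} t^{ν+1} (F_{ν+1}(a,t) − F_{ν+1}(b,t)) = C_{ν+1}, where C_{ν+1} := (a^{2ν+2} − b^{2ν+2}) / (2^{ν+1} Γ(ν+2)). -/

import Mathlib

open MeasureTheory Filter

/-- `F ν x t = (x^{2ν}/(2^ν Γ(ν))) ∫_t^∞ s^{-(ν+1)} exp(-x²/(2s)) ds`. -/
noncomputable def F (ν x t : ℝ) : ℝ :=
  (x ^ (2 * ν) / (2 ^ ν * Real.Gamma ν)) *
    ∫ s in Set.Ioi t, s ^ (-(ν + 1)) * Real.exp (-x ^ 2 / (2 * s))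

lemma integrable_aux (p x t : ℝ) (hp : 0 < p) (ht : 0 < t) :
    IntegrableOn (fun s : ℝ => s ^ (-(p + 1)) * Real.exp (-x ^ 2 / (2 * s)))
      (Set.Ioi t) := by
  have hbase : IntegrableOn (fun s : ℝ => s ^ (-(p + 1))) (Set.Ioi t) :=
    integrableOn_Ioi_rpow_of_lt (by linarith) ht
  refine hbase.mono' ?_ ?_
  · apply AEStronglyMeasurable.mul
    · exact ((measurable_id.pow_const _).aestronglyMeasurable)
    · exact (Real.measurable_exp.comp ((measurable_const).div
        (measurable_const.mul measurable_id))).aestronglyMeasurable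
  · filter_upwards [ae_restrict_mem measurableSet_Ioi] with s hs
    have hs0 : 0 < s := ht.trans hs
    have h1 : Real.exp (-x ^ 2 / (2 * s)) ≤ 1 := by
      apply Real.exp_le_one_iff.mpr
      apply div_nonpos_of_nonpos_of_nonneg
      · nlinarith [sq_nonneg x]
      · linarith
    have h2 : (0:ℝ) ≤ s ^ (-(p + 1)) := Real.rpow_nonneg hs0.le _
    rw [Real.norm_eq_abs, abs_mul, abs_of_nonneg h2,
      abs_of_pos (Real.exp_pos _)]
    calc s ^ (-(p + 1)) * Real.exp (-x ^ 2 / (2 * s))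
        ≤ s ^ (-(p + 1)) * 1 := by nlinarith [Real.exp_pos (-x ^ 2 / (2 * s))]
      _ = s ^ (-(p + 1)) := mul_one _

lemma key (p x : ℝ) (hp : 0 < p) :
    Tendsto (fun t : ℝ =>
        t ^ p * ∫ s in Set.Ioi t, s ^ (-(p + 1)) * Real.exp (-x ^ 2 / (2 * s)))
      atTop (nhds (1 / p)) := by
  have hInt : ∀ t : ℝ, 0 < t → ∫ s in Set.Ioi t, s ^ (-(p + 1))
      = t ^ (-p) / p := by
    intro t ht
    rw [integral_Ioi_rpow_of_lt (by linarith) ht]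
    have : -(p + 1) + 1 = -p := by ring
    rw [this]
    field_simp
  -- lower bound tendsto
  have hlow : Tendsto (fun t : ℝ => Real.exp (-x ^ 2 / (2 * t)) / p) atTop (nhds (1 / p)) := by
    have h0 : Tendsto (fun t : ℝ => -x ^ 2 / (2 * t)) atTop (nhds 0) := by
      apply Tendsto.div_atTop (tendsto_const_nhds)
      exact Tendsto.const_mul_atTop two_pos tendsto_id
    have := (Real.continuous_exp.tendsto 0).comp h0
    rw [Real.exp_zero] at this
    exact this.div_const p
  refine tendsto_of_tendsto_of_tendsto_of_le_of_le' hlow tendsto_const_nhds ?_ ?_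
  · filter_upwards [eventually_gt_atTop (0:ℝ)] with t ht
    have hI := integrable_aux p x t hp ht
    have hmono : ∫ s in Set.Ioi t, Real.exp (-x ^ 2 / (2 * t)) * s ^ (-(p + 1))
        ≤ ∫ s in Set.Ioi t, s ^ (-(p + 1)) * Real.exp (-x ^ 2 / (2 * s)) := by
      apply setIntegral_mono_on
      · exact (integrableOn_Ioi_rpow_of_lt (by linarith) ht).const_mul _
      · exact hI
      · exact measurableSet_Ioi
      · intro s hs
        have hs0 : 0 < s := ht.trans hs
        have h2 : (0:ℝ) ≤ s ^ (-(p + 1)) := Real.rpow_nonneg hs0.le _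
        have hle : Real.exp (-x ^ 2 / (2 * t)) ≤ Real.exp (-x ^ 2 / (2 * s)) := by
          apply Real.exp_le_exp_of_le
          rw [div_le_div_iff₀ (by linarith) (by linarith)]
          nlinarith [sq_nonneg x, (Set.mem_Ioi.mp hs).le]
        nlinarith [Real.exp_pos (-x ^ 2 / (2 * t))]
    have hleft : ∫ s in Set.Ioi t, Real.exp (-x ^ 2 / (2 * t)) * s ^ (-(p + 1))
        = Real.exp (-x ^ 2 / (2 * t)) * (t ^ (-p) / p) := by
      rw [integral_const_mul, hInt t ht]
    have hpow : t ^ p * t ^ (-p) = 1 := by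
      rw [← Real.rpow_add ht]; simp
    calc Real.exp (-x ^ 2 / (2 * t)) / p
        = t ^ p * (Real.exp (-x ^ 2 / (2 * t)) * (t ^ (-p) / p)) := by
          field_simp; nlinarith [Real.exp_pos (-x ^ 2 / (2 * t))]
      _ ≤ t ^ p * ∫ s in Set.Ioi t, s ^ (-(p + 1)) * Real.exp (-x ^ 2 / (2 * s)) := by
          rw [← hleft]
          exact mul_le_mul_of_nonneg_left hmono (Real.rpow_nonneg ht.le _)
  · filter_upwards [eventually_gt_atTop (0:ℝ)] with t ht
    have hI := integrable_aux p x t hp ht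
    have hmono : ∫ s in Set.Ioi t, s ^ (-(p + 1)) * Real.exp (-x ^ 2 / (2 * s))
        ≤ ∫ s in Set.Ioi t, s ^ (-(p + 1)) := by
      apply setIntegral_mono_on hI (integrableOn_Ioi_rpow_of_lt (by linarith) ht)
        measurableSet_Ioi
      intro s hs
      have hs0 : 0 < s := ht.trans hs
      have h2 : (0:ℝ) ≤ s ^ (-(p + 1)) := Real.rpow_nonneg hs0.le _
      have h1 : Real.exp (-x ^ 2 / (2 * s)) ≤ 1 := by
        apply Real.exp_le_one_iff.mpr
        apply div_nonpos_of_nonpos_of_nonneg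
        · nlinarith [sq_nonneg x]
        · linarith
      nlinarith
    have hpow : t ^ p * t ^ (-p) = 1 := by
      rw [← Real.rpow_add ht]; simp
    calc t ^ p * ∫ s in Set.Ioi t, s ^ (-(p + 1)) * Real.exp (-x ^ 2 / (2 * s))
        ≤ t ^ p * ∫ s in Set.Ioi t, s ^ (-(p + 1)) :=
          mul_le_mul_of_nonneg_left hmono (Real.rpow_nonneg ht.le _)
      _ = 1 / p := by rw [hInt t ht]; field_simp; nlinarith

theorem stmt_11 (ν a b : ℝ) (hν : 0 < ν) (hb : 0 ≤ b) (hba : b < a) :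
    Tendsto (fun t : ℝ => t ^ (ν + 1) * (F (ν + 1) a t - F (ν + 1) b t)) atTop
      (nhds ((a ^ (2 * ν + 2) - b ^ (2 * ν + 2)) / (2 ^ (ν + 1) * Real.Gamma (ν + 2)))) := by
  have hp : (0:ℝ) < ν + 1 := by linarith
  set Ca : ℝ := a ^ (2 * (ν + 1)) / (2 ^ (ν + 1) * Real.Gamma (ν + 1)) with hCa
  set Cb : ℝ := b ^ (2 * (ν + 1)) / (2 ^ (ν + 1) * Real.Gamma (ν + 1)) with hCb
  have h1 := (key (ν + 1) a hp).const_mul Ca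
  have h2 := (key (ν + 1) b hp).const_mul Cb
  have h3 := h1.sub h2
  have heq : (fun t : ℝ =>
      Ca * (t ^ (ν + 1) * ∫ s in Set.Ioi t, s ^ (-(ν + 1 + 1)) * Real.exp (-a ^ 2 / (2 * s)))
      - Cb * (t ^ (ν + 1) * ∫ s in Set.Ioi t, s ^ (-(ν + 1 + 1)) * Real.exp (-b ^ 2 / (2 * s))))
      = (fun t : ℝ => t ^ (ν + 1) * (F (ν + 1) a t - F (ν + 1) b t)) := by
    funext t
    simp only [F, hCa, hCb]
    ring
  rw [heq] at h3
  convert h3 using 2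
  have hG : Real.Gamma (ν + 2) = (ν + 1) * Real.Gamma (ν + 1) := by
    have := Real.Gamma_add_one (by linarith : ν + 1 ≠ 0)
    rw [show ν + 1 + 1 = ν + 2 by ring] at this
    rw [this]
  have hGpos : 0 < Real.Gamma (ν + 1) := Real.Gamma_pos_of_pos hp
  have h2pos : (0:ℝ) < 2 ^ (ν + 1) := Real.rpow_pos_of_pos two_pos _
  have hea : a ^ (2 * ν + 2) = a ^ (2 * (ν + 1)) := by ring_nf
  have heb : b ^ (2 * ν + 2) = b ^ (2 * (ν + 1)) := by ring_nf
  rw [hG, hea, heb, hCa, hCb, mul_one_div, mul_one_div, div_div, div_div, ← sub_div]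
  congr 1
  ring
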